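/- Let α > 0 and let g, f : ℝ → ℝ be measurable probability density functions (nonnegative, integrating to 1 with respect to Lebesgue measure) such that f^{1+α}, g·f^{α}, and g^{1+α} are integrable. Then the density power divergence d_α(g,f) = ∫ [f(x)^{1+α} − (1 + 1/α)·g(x)·f(x)^{α} + (1/α)·g(x)^{1+α}] dx is nonnegative, and d_α(g,f) = 0 if and only if f = g Lebesgue-almost everywhere. -/

import Mathlib

open MeasureTheory


lemma dpd_pointwise {α : ℝ} (hα : 0 < α) {a b : ℝ} (ha : 0 ≤ a) (hb : 0 ≤ b) :
    0 ≤ b ^ (1 + α) - (1 + 1 / α) * a * b ^ α + (1 / α) * a ^ (1 + α) ∧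
    (b ^ (1 + α) - (1 + 1 / α) * a * b ^ α + (1 / α) * a ^ (1 + α) = 0 ↔ a = b) := by
  have hp : (1 : ℝ) < 1 + α := by linarith
  have hbb : b ^ (1 + α) = b ^ α * b := by
    rw [Real.rpow_add' hb (by positivity), Real.rpow_one]; ring
  have hkey : α * (b ^ (1 + α) - (1 + 1 / α) * a * b ^ α + (1 / α) * a ^ (1 + α))
      = a ^ (1 + α) - b ^ (1 + α) - (1 + α) * b ^ α * (a - b) := by
    rw [hbb]; field_simp; ring
  have htang : b ^ (1 + α) + (1 + α) * b ^ α * (a - b) ≤ a ^ (1 + α) ∧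
      (b ^ (1 + α) + (1 + α) * b ^ α * (a - b) = a ^ (1 + α) ↔ a = b) := by
    rcases eq_or_lt_of_le hb with hb0 | hb0
    · rw [← hb0]
      rw [Real.zero_rpow (by positivity), Real.zero_rpow (ne_of_gt hα)]
      simp only [zero_mul, mul_zero, zero_add]
      constructor
      · exact Real.rpow_nonneg ha _
      · constructor
        · intro h
          by_contra hab
          have ha0 : 0 < a := lt_of_le_of_ne ha (Ne.symm hab)
          have := Real.rpow_pos_of_pos ha0 (1 + α)
          linarith
        · intro h; subst h; rw [Real.zero_rpow (by positivity)]
    · rcases eq_or_ne a b with hab | hab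
      · subst hab
        exact ⟨by simp, by simp⟩
      · have hs : -1 ≤ a / b - 1 := by
          have : 0 ≤ a / b := div_nonneg ha hb; linarith
        have hs' : a / b - 1 ≠ 0 := by
          intro h
          apply hab
          field_simp at h
          linarith
        have hber := one_add_mul_self_lt_rpow_one_add hs hs' hp
        have h1 : (1 + (a / b - 1)) = a / b := by ring
        rw [h1] at hber
        rw [Real.div_rpow ha hb] at hber
        have hbp : 0 < b ^ (1 + α) := Real.rpow_pos_of_pos hb0 _
        have hmul := mul_lt_mul_of_pos_right hber hbp
        rw [div_mul_cancel₀ _ (ne_of_gt hbp)] at hmul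
        have hlt : b ^ (1 + α) + (1 + α) * b ^ α * (a - b) < a ^ (1 + α) := by
          calc b ^ (1 + α) + (1 + α) * b ^ α * (a - b)
              = (1 + (1 + α) * (a / b - 1)) * b ^ (1 + α) := by
                rw [hbb]; field_simp
            _ < a ^ (1 + α) := hmul
        exact ⟨hlt.le, by constructor <;> intro h <;> [linarith; exact absurd h hab]⟩
  constructor
  · nlinarith [htang.1, hkey]
  · constructor
    · intro h
      apply htang.2.mp
      have h0 : α * (b ^ (1 + α) - (1 + 1 / α) * a * b ^ α + (1 / α) * a ^ (1 + α)) = 0 := by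
        rw [h]; ring
      rw [hkey] at h0; linarith
    · intro h
      have h1 := htang.2.mpr h
      have h0 : α * (b ^ (1 + α) - (1 + 1 / α) * a * b ^ α + (1 / α) * a ^ (1 + α)) = 0 := by
        rw [hkey]; linarith
      rcases mul_eq_zero.mp h0 with h2 | h2
      · exact absurd h2 hα.ne'
      · exact h2

/-- nonnegativity of the density power divergence
d_α(g,f) = ∫ [f^{1+α} − (1+1/α)·g·f^{α} + (1/α)·g^{1+α}] dx for densities g, f,
with equality iff f = g Lebesgue-almost everywhere. -/
theorem dpd_nonneg_and_eq_zero_iff (α : ℝ) (hα : 0 < α) (g f : ℝ → ℝ)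
    (hgm : Measurable g) (hfm : Measurable f)
    (hg0 : ∀ x, 0 ≤ g x) (hf0 : ∀ x, 0 ≤ f x)
    (hg1 : ∫ x, g x = 1) (hf1 : ∫ x, f x = 1)
    (hint1 : Integrable (fun x => f x ^ (1 + α)))
    (hint2 : Integrable (fun x => g x * f x ^ α))
    (hint3 : Integrable (fun x => g x ^ (1 + α))) :
    0 ≤ ∫ x, (f x ^ (1 + α) - (1 + 1 / α) * g x * f x ^ α + (1 / α) * g x ^ (1 + α)) ∧
    ((∫ x, (f x ^ (1 + α) - (1 + 1 / α) * g x * f x ^ α + (1 / α) * g x ^ (1 + α))) = 0 ↔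
      f =ᵐ[volume] g) := by
  have hF : Integrable (fun x =>
      f x ^ (1 + α) - (1 + 1 / α) * g x * f x ^ α + (1 / α) * g x ^ (1 + α)) := by
    have h2 : Integrable (fun x => (1 + 1 / α) * g x * f x ^ α) := by
      simpa [mul_assoc] using hint2.const_mul (1 + 1 / α)
    exact (hint1.sub h2).add (hint3.const_mul (1 / α))
  have hFnn : ∀ x, 0 ≤ f x ^ (1 + α) - (1 + 1 / α) * g x * f x ^ α + (1 / α) * g x ^ (1 + α) :=
    fun x => (dpd_pointwise hα (hg0 x) (hf0 x)).1
  refine ⟨integral_nonneg hFnn, ?_⟩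
  rw [integral_eq_zero_iff_of_nonneg hFnn hF]
  constructor
  · intro h
    filter_upwards [h] with x hx
    exact ((dpd_pointwise hα (hg0 x) (hf0 x)).2.mp hx).symm
  · intro h
    filter_upwards [h] with x hx
    exact (dpd_pointwise hα (hg0 x) (hf0 x)).2.mpr hx.symm
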